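/- Let n ≥ 2, let u, u' ∈ ℝⁿ be unit timelike vectors, and let S be a real n×n matrix. If θ_uᵀ S θ_u = S and θ_{u'}ᵀ S θ_{u'} = −S, then S = 0. In other words, a nonzero rank-2 tensor cannot be purely electric with respect to one unit timelike direction and purely magnetic with respect to another (possibly different) unit timelike direction. -/

import Mathlib

open Matrix

noncomputable section

/-- The Minkowski metric `η = diag(-1, 1, …, 1)` on `ℝⁿ`. -/
def eta (n : ℕ) : Matrix (Fin n) (Fin n) ℝ :=
  Matrix.diagonal fun i => if i.val = 0 then (-1 : ℝ) else 1

/-- The reflection `θ_u = I + 2u(ηu)ᵀ` sending `u ↦ -u` and fixing `u^⊥`. -/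
def theta {n : ℕ} (u : Fin n → ℝ) : Matrix (Fin n) (Fin n) ℝ :=
  1 + (2 : ℝ) • vecMulVec u ((eta n).mulVec u)

namespace Stmt5Aux

variable {n : ℕ}

lemma eta_transpose : (eta n)ᵀ = eta n := Matrix.diagonal_transpose _

lemma eta_mul_eta : eta n * eta n = (1 : Matrix (Fin n) (Fin n) ℝ) := by
  rw [eta, diagonal_mul_diagonal]
  have : ∀ i : Fin n, ((if (i : Fin n).val = 0 then (-1:ℝ) else 1) * (if i.val = 0 then (-1:ℝ) else 1)) = 1 := by
    intro i; by_cases h : i.val = 0 <;> simp [h]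
  simp only [this, diagonal_one]

lemma eta_mulVec_eta (x : Fin n → ℝ) : (eta n) *ᵥ ((eta n) *ᵥ x) = x := by
  rw [mulVec_mulVec, eta_mul_eta, one_mulVec]

lemma mul_vecMulVec (A : Matrix (Fin n) (Fin n) ℝ) (a b : Fin n → ℝ) :
    A * vecMulVec a b = vecMulVec (A *ᵥ a) b := by
  ext i j
  simp [mul_apply, vecMulVec_apply, mulVec, dotProduct, Finset.sum_mul, mul_assoc]

lemma vecMulVec_mul (a b : Fin n → ℝ) (A : Matrix (Fin n) (Fin n) ℝ) :
    vecMulVec a b * A = vecMulVec a (Aᵀ *ᵥ b) := by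
  ext i j
  simp only [mul_apply, vecMulVec_apply, mulVec, dotProduct, transpose_apply]
  rw [Finset.mul_sum]
  exact Finset.sum_congr rfl fun k _ => by ring

lemma vecMulVec_mul_vecMulVec (a b c d : Fin n → ℝ) :
    vecMulVec a b * vecMulVec c d = (b ⬝ᵥ c) • vecMulVec a d := by
  ext i j
  simp [mul_apply, vecMulVec_apply, dotProduct, Finset.sum_mul, Finset.mul_sum]
  rw [Finset.sum_congr rfl (fun k _ => by ring : ∀ k ∈ Finset.univ, a i * b k * (c k * d j) = b k * c k * (a i * d j)), ← Finset.sum_mul]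

lemma vecMulVec_transpose (a b : Fin n → ℝ) : (vecMulVec a b)ᵀ = vecMulVec b a := by
  ext i j; simp [vecMulVec_apply, transpose_apply, mul_comm]

lemma theta_transpose (u : Fin n → ℝ) :
    (theta u)ᵀ = eta n * theta u * eta n := by
  simp only [theta, transpose_add, transpose_one, transpose_smul, vecMulVec_transpose,
    Matrix.mul_add, Matrix.add_mul, Matrix.mul_one, Matrix.one_mul, Matrix.mul_smul,
    Matrix.smul_mul, mul_vecMulVec, vecMulVec_mul, eta_transpose, eta_mulVec_eta, eta_mul_eta]

lemma theta_mul_theta {u : Fin n → ℝ} (hu : u ⬝ᵥ (eta n).mulVec u = -1) :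
    theta u * theta u = 1 := by
  have h1 : ((eta n) *ᵥ u) ⬝ᵥ u = -1 := by rw [dotProduct_comm]; exact hu
  simp only [theta, Matrix.add_mul, Matrix.mul_add, Matrix.one_mul, Matrix.mul_one,
    Matrix.smul_mul, Matrix.mul_smul, vecMulVec_mul_vecMulVec, h1]
  ext i j
  simp [Matrix.add_apply, Matrix.smul_apply, Matrix.one_apply, vecMulVec_apply]
  ring

lemma theta_mul_eta (u : Fin n → ℝ) :
    theta u * eta n = eta n + (2 : ℝ) • vecMulVec u u := by
  rw [theta, add_mul, one_mul, Matrix.smul_mul, vecMulVec_mul, eta_transpose, eta_mulVec_eta]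

lemma theta_eta_thetaT {u : Fin n → ℝ} (hu : u ⬝ᵥ (eta n).mulVec u = -1) :
    theta u * eta n * (theta u)ᵀ = eta n := by
  rw [theta_transpose]
  have hEE : ∀ X : Matrix (Fin n) (Fin n) ℝ, eta n * (eta n * X) = X := fun X => by
    rw [← Matrix.mul_assoc, eta_mul_eta, Matrix.one_mul]
  have hθθ : ∀ X : Matrix (Fin n) (Fin n) ℝ, theta u * (theta u * X) = X := fun X => by
    rw [← Matrix.mul_assoc, theta_mul_theta hu, Matrix.one_mul]
  simp only [Matrix.mul_assoc, hEE, hθθ]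

/-- Abstract conjugation identity. -/
lemma conj_identity (θ E A B : Matrix (Fin n) (Fin n) ℝ)
    (h1 : θ * θ = 1) (h2 : θ * E * θᵀ = E) :
    (θ * E) * (θᵀ * A * θ) * ((θ * E) * B) = E * A * (E * B) := by
  have h1' : ∀ X : Matrix (Fin n) (Fin n) ℝ, θ * (θ * X) = X := fun X => by
    rw [← Matrix.mul_assoc, h1, Matrix.one_mul]
  have h2' : ∀ X : Matrix (Fin n) (Fin n) ℝ, θ * (E * (θᵀ * X)) = E * X := fun X => by
    simp only [← Matrix.mul_assoc]; rw [h2]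
  simp only [Matrix.mul_assoc, h1', h2']

/-- Key substitution lemma. -/
lemma key {u : Fin n → ℝ} (hu : u ⬝ᵥ (eta n).mulVec u = -1)
    (S : Matrix (Fin n) (Fin n) ℝ) (c : ℝ) (h : (theta u)ᵀ * S * theta u = c • S) :
    (theta u * eta n) * Sᵀ * ((theta u * eta n) * S) = c • (eta n * Sᵀ * (eta n * S)) := by
  have hT : (theta u)ᵀ * Sᵀ * (theta u)ᵀᵀ = c • Sᵀ := by
    have := congrArg Matrix.transpose h
    simpa [Matrix.transpose_mul, Matrix.mul_assoc] using this
  rw [Matrix.transpose_transpose] at hT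
  have hθθT : (theta u)ᵀ * (theta u)ᵀ = 1 := by
    have := congrArg Matrix.transpose (theta_mul_theta hu)
    simpa [Matrix.transpose_mul] using this
  have hS : Sᵀ = c • ((theta u)ᵀ * Sᵀ * theta u) := by
    have h1 : (theta u)ᵀ * ((theta u)ᵀ * Sᵀ * theta u) * theta u = Sᵀ := by
      calc (theta u)ᵀ * ((theta u)ᵀ * Sᵀ * theta u) * theta u
          = ((theta u)ᵀ * (theta u)ᵀ) * Sᵀ * (theta u * theta u) := by
            simp only [Matrix.mul_assoc]
        _ = Sᵀ := by rw [hθθT, theta_mul_theta hu, Matrix.one_mul, Matrix.mul_one]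
    calc Sᵀ = (theta u)ᵀ * ((theta u)ᵀ * Sᵀ * theta u) * theta u := h1.symm
      _ = (theta u)ᵀ * (c • Sᵀ) * theta u := by rw [hT]
      _ = c • ((theta u)ᵀ * Sᵀ * theta u) := by
          rw [Matrix.mul_smul, Matrix.smul_mul]
  conv_lhs => rw [hS]
  rw [Matrix.mul_smul, Matrix.smul_mul,
    conj_identity (theta u) (eta n) Sᵀ S (theta_mul_theta hu) (theta_eta_thetaT hu)]

section Scalar

lemma scalar_core (a b s X W c y0 Y : ℝ) (hX : 0 ≤ X) (hW : 0 ≤ W) (hb : b^2 = 1 + W)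
    (hCS : s^2 ≤ X * W) (hx : 0 < a^2 + X)
    (hc : c = a*b + s) (hy0 : y0 = a - c*b) (hY : Y = X + 2*c*s + c^2*W) :
    0 < (X - a^2) + 2*c^2 := by
  have hid : (X - a^2) + 2*c^2 = Y - y0^2 + c^2 := by
    linear_combination (-1)*hY + (y0 + a - c*b)*hy0 + c^2*hb + 2*c*hc
  have h2 : (2*c*s)^2 ≤ (X + c^2*W)^2 := by
    nlinarith [sq_nonneg (X - c^2*W), mul_nonneg (sq_nonneg c) (sub_nonneg.2 hCS)]
  have hYnn : 0 ≤ Y := by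
    nlinarith [h2, hX, mul_nonneg (sq_nonneg c) hW]
  have hCSy : (s + c*W)^2 ≤ Y * W := by
    nlinarith [hCS, mul_nonneg (sq_nonneg c) hW]
  have hOrth : y0 * b = -(s + c*W) := by
    rw [hy0, hc]; linear_combination (-(a*b+s)) * hb
  have hsq : (y0*b)^2 = (s + c*W)^2 := by rw [hOrth]; ring
  have hbb : y0^2*(1+W) = (y0*b)^2 := by rw [mul_pow, hb]
  have hy0W : y0^2*(1+W) ≤ Y*W := by rw [hbb, hsq]; exact hCSy
  by_contra hcon
  push_neg at hcon
  rw [hid] at hcon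
  have hYz : Y ≤ -(c^2) - c^2*W := by
    nlinarith [hy0W, hcon, hW, sq_nonneg c, mul_nonneg (sq_nonneg c) hW]
  have hczero : c = 0 := by
    have : c^2 ≤ 0 := by nlinarith [hYnn, mul_nonneg (sq_nonneg c) hW]
    exact pow_eq_zero_iff (n := 2) (by norm_num) |>.mp (le_antisymm this (sq_nonneg c))
  have hYzero : Y = 0 := le_antisymm (by rw [hczero] at hYz; simpa using hYz) hYnn
  have hy0zero : y0 = 0 := by
    have : y0^2 ≤ 0 := by nlinarith [hy0W, hYzero, hW, sq_nonneg y0]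
    exact pow_eq_zero_iff (n := 2) (by norm_num) |>.mp (le_antisymm this (sq_nonneg y0))
  have ha : a = 0 := by rw [hy0zero, hczero] at hy0; linarith [hy0]
  have hXzero : X = 0 := by rw [hczero] at hY; rw [hYzero] at hY; linarith [hY]
  rw [ha, hXzero] at hx; norm_num at hx

lemma dot_split [NeZero n] (a b : Fin n → ℝ) :
    a ⬝ᵥ b = a 0 * b 0 + ∑ i ∈ Finset.univ.erase (0 : Fin n), a i * b i := by
  rw [dotProduct]
  exact (Finset.add_sum_erase _ _ (Finset.mem_univ 0)).symm

lemma etadot_split [NeZero n] (a b : Fin n → ℝ) :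
    a ⬝ᵥ ((eta n) *ᵥ b) = -(a 0 * b 0) + ∑ i ∈ Finset.univ.erase (0 : Fin n), a i * b i := by
  have key : ∀ i : Fin n, a i * ((eta n) *ᵥ b) i = (if i = 0 then -(a i * b i) else a i * b i) := by
    intro i
    rw [eta, mulVec_diagonal]
    by_cases h : i = 0
    · subst h; simp
    · have h' : (i : ℕ) ≠ 0 := fun hv => h (Fin.ext (by simp [hv]))
      simp [h', h]
  rw [dotProduct, Finset.sum_congr rfl fun i _ => key i,
    ← Finset.add_sum_erase _ _ (Finset.mem_univ (0 : Fin n))]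
  simp only [if_pos rfl]
  congr 1
  exact Finset.sum_congr rfl fun i hi => if_neg (Finset.ne_of_mem_erase hi)

lemma quad_pos [NeZero n] {w : Fin n → ℝ} (hw : w ⬝ᵥ (eta n) *ᵥ w = -1)
    {x : Fin n → ℝ} (hx : x ≠ 0) :
    0 < x ⬝ᵥ ((eta n) *ᵥ x) + 2 * (x ⬝ᵥ w)^2 := by
  classical
  have hXnn : (0:ℝ) ≤ ∑ i ∈ Finset.univ.erase (0 : Fin n), x i * x i :=
    Finset.sum_nonneg fun i _ => mul_self_nonneg _
  have hWnn : (0:ℝ) ≤ ∑ i ∈ Finset.univ.erase (0 : Fin n), w i * w i :=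
    Finset.sum_nonneg fun i _ => mul_self_nonneg _
  have hb : (w 0)^2 = 1 + ∑ i ∈ Finset.univ.erase (0 : Fin n), w i * w i := by
    have := hw
    rw [etadot_split] at this
    nlinarith [this]
  have hCS : (∑ i ∈ Finset.univ.erase (0 : Fin n), x i * w i)^2 ≤
      (∑ i ∈ Finset.univ.erase (0 : Fin n), x i * x i) *
      (∑ i ∈ Finset.univ.erase (0 : Fin n), w i * w i) := by
    simpa only [pow_two] using
      Finset.sum_mul_sq_le_sq_mul_sq (Finset.univ.erase (0 : Fin n)) x w
  have hpos : 0 < (x 0)^2 + ∑ i ∈ Finset.univ.erase (0 : Fin n), x i * x i := by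
    obtain ⟨i0, hi0⟩ : ∃ i, x i ≠ 0 := by
      by_contra h; push_neg at h; exact hx (funext h)
    by_cases h0 : i0 = 0
    · subst h0; positivity
    · have hmem : i0 ∈ Finset.univ.erase (0 : Fin n) :=
        Finset.mem_erase.2 ⟨h0, Finset.mem_univ _⟩
      have : x i0 * x i0 ≤ ∑ i ∈ Finset.univ.erase (0 : Fin n), x i * x i :=
        Finset.single_le_sum (fun i _ => mul_self_nonneg (x i)) hmem
      nlinarith [mul_self_nonneg (x i0), sq_nonneg (x 0), this, mul_self_pos.2 hi0]
  have core := scalar_core (x 0) (w 0) (∑ i ∈ Finset.univ.erase (0 : Fin n), x i * w i)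
    (∑ i ∈ Finset.univ.erase (0 : Fin n), x i * x i)
    (∑ i ∈ Finset.univ.erase (0 : Fin n), w i * w i)
    _ _ _ hXnn hWnn hb hCS hpos rfl rfl rfl
  rw [etadot_split, dot_split]
  nlinarith [core]

end Scalar

lemma vecMulVec_mulVec (a b x : Fin n → ℝ) :
    (vecMulVec a b) *ᵥ x = (b ⬝ᵥ x) • a := by
  funext i
  simp only [mulVec, vecMulVec_apply, dotProduct, Pi.smul_apply, smul_eq_mul, Finset.sum_mul]
  exact Finset.sum_congr rfl fun k _ => by ring

lemma posDef_N [NeZero n] {w : Fin n → ℝ} (hw : w ⬝ᵥ (eta n) *ᵥ w = -1) :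
    Matrix.PosDef (eta n + (2:ℝ) • vecMulVec w w) := by
  refine Matrix.PosDef.of_dotProduct_mulVec_pos ?_ ?_
  · ext i j
    simp only [conjTranspose_apply, Matrix.add_apply, Matrix.smul_apply, vecMulVec_apply,
      eta, Matrix.diagonal_apply, RCLike.star_def, starRingEnd_apply, star_trivial]
    rcases eq_or_ne i j with rfl | hij
    · ring
    · simp [hij, Ne.symm hij]; ring
  · intro x hxne
    have hstar : star x = x := by funext i; simp
    rw [hstar, add_mulVec, smul_mulVec, vecMulVec_mulVec, dotProduct_add]
    have h2 : x ⬝ᵥ ((2:ℝ) • (w ⬝ᵥ x) • w) = 2 * ((w ⬝ᵥ x) * (x ⬝ᵥ w)) := by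
      rw [dotProduct_smul, dotProduct_smul]; simp [mul_assoc]
    rw [h2, dotProduct_comm w x]
    have := quad_pos hw hxne
    nlinarith [this]

open scoped MatrixOrder in
lemma trace_sq_pos {N S : Matrix (Fin n) (Fin n) ℝ} (hN : N.PosDef) (hS : S ≠ 0) :
    0 < Matrix.trace (N * Sᵀ * (N * S)) := by
  classical
  have hpsd := hN.posSemidef
  set R := CFC.sqrt N with hRdef
  have hRR : R * R = N := CFC.sqrt_mul_sqrt_self N hpsd.nonneg
  have hRsym : Rᵀ = R := by
    have h := (CFC.sqrt_nonneg N).posSemidef.1.eq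
    rwa [Matrix.conjTranspose_eq_transpose_of_trivial] at h
  have hdetR : IsUnit R.det := by
    have hmul : R.det * R.det = N.det := by rw [← Matrix.det_mul, hRR]
    have hd := hN.det_pos
    have hne : R.det ≠ 0 := by
      intro h; rw [h, mul_zero] at hmul; rw [← hmul] at hd; exact lt_irrefl _ hd
    exact hne.isUnit
  have hT : R * S * R ≠ 0 := by
    intro h
    apply hS
    have h1 : R⁻¹ * (R * S * R) * R⁻¹ = S := by
      calc R⁻¹ * (R * S * R) * R⁻¹
          = R⁻¹ * R * S * (R * R⁻¹) := by simp only [Matrix.mul_assoc]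
        _ = S := by
            rw [Matrix.nonsing_inv_mul _ hdetR, Matrix.mul_nonsing_inv _ hdetR,
              Matrix.one_mul, Matrix.mul_one]
    rw [h, Matrix.mul_zero, Matrix.zero_mul] at h1
    exact h1.symm
  have e1 : (R*S*R)ᵀ = R * Sᵀ * R := by
    rw [Matrix.transpose_mul, Matrix.transpose_mul, hRsym]
    simp only [Matrix.mul_assoc]
  have hRR' : ∀ X : Matrix (Fin n) (Fin n) ℝ, R * (R * X) = N * X := fun X => by
    rw [← Matrix.mul_assoc, hRR]
  have lhs_eq : Matrix.trace (N * Sᵀ * (N * S)) = Matrix.trace (Sᵀ * (N * (S * N))) := by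
    rw [Matrix.mul_assoc N Sᵀ _, Matrix.trace_mul_comm]
    simp only [Matrix.mul_assoc]
  have rhs_eq : Matrix.trace ((R*S*R)ᵀ * (R*S*R)) = Matrix.trace (Sᵀ * (N * (S * N))) := by
    rw [e1]
    have h3 : (R * Sᵀ * R) * (R*S*R) = R * (Sᵀ * (N * (S * R))) := by
      simp only [Matrix.mul_assoc]
      rw [hRR']
    rw [h3, Matrix.trace_mul_comm]
    simp only [Matrix.mul_assoc, hRR]
  rw [lhs_eq, ← rhs_eq]
  have tr_eq : Matrix.trace ((R*S*R)ᵀ * (R*S*R)) = ∑ j, ∑ i, ((R*S*R) i j)^2 := by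
    simp only [Matrix.trace, Matrix.diag, Matrix.mul_apply, Matrix.transpose_apply, pow_two]
  rw [tr_eq]
  obtain ⟨i0, j0, hij⟩ : ∃ i j, (R*S*R) i j ≠ 0 := by
    by_contra h; push_neg at h
    exact hT (by ext i j; exact h i j)
  have hterm : 0 < ((R*S*R) i0 j0)^2 := by positivity
  have hinner : 0 < ∑ i, ((R*S*R) i j0)^2 :=
    Finset.sum_pos' (fun i _ => sq_nonneg _)
      ⟨i0, Finset.mem_univ _, hterm⟩
  exact Finset.sum_pos' (fun j _ => Finset.sum_nonneg fun i _ => sq_nonneg _)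
    ⟨j0, Finset.mem_univ _, hinner⟩

end Stmt5Aux

open Stmt5Aux

/-- A nonzero rank-2 tensor cannot be purely electric with respect to one unit
timelike direction and purely magnetic with respect to another. -/
theorem stmt5 {n : ℕ} (hn : 2 ≤ n) (u u' : Fin n → ℝ)
    (hu : u ⬝ᵥ (eta n).mulVec u = -1) (hu' : u' ⬝ᵥ (eta n).mulVec u' = -1)
    (S : Matrix (Fin n) (Fin n) ℝ)
    (hPE : (theta u)ᵀ * S * theta u = S)
    (hPM : (theta u')ᵀ * S * theta u' = -S) :
    S = 0 := by
  haveI : NeZero n := ⟨by omega⟩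
  by_contra hS
  have key_u := key hu S 1 (by simpa using hPE)
  have key_u' := key hu' S (-1) (by rw [hPM]; ext i j; simp)
  have hN : (theta u * eta n).PosDef := by
    rw [theta_mul_eta]; exact posDef_N hu
  have hN' : (theta u' * eta n).PosDef := by
    rw [theta_mul_eta]; exact posDef_N hu'
  have h1 := trace_sq_pos hN hS
  have h2 := trace_sq_pos hN' hS
  rw [show theta u * eta n * Sᵀ * (theta u * eta n * S)
      = (theta u * eta n) * Sᵀ * ((theta u * eta n) * S) from rfl, key_u] at h1
  rw [show theta u' * eta n * Sᵀ * (theta u' * eta n * S)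
      = (theta u' * eta n) * Sᵀ * ((theta u' * eta n) * S) from rfl, key_u'] at h2
  rw [Matrix.trace_smul] at h1 h2
  simp only [one_smul, smul_eq_mul, neg_smul, Matrix.trace_neg] at h1 h2
  linarith [h1, h2]

end
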